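/- Let k ≥ 2 and q be a prime power with q ≡ 1 (mod k) if q even, q ≡ 1 (mod 2k) if q odd. Let H_k(q) be the induced subgraph of G_k(q) on the k-th power residues S_k, and H_k^1(q) the induced subgraph of H_k(q) on the neighbors of 1. Then for any positive integer n, K_{n+1}(H_k(q)) = ((q-1)/(k(n+1)))·K_n(H_k^1(q)), where K_m denotes the number of complete subgraphs of order m. -/

import Mathlib

open SimpleGraph

lemma aux_ncard_cliqueSet_iso {α β : Type*} (A : SimpleGraph α) (B : SimpleGraph β)
    (e : A ≃g B) (n : ℕ) : (A.cliqueSet n).ncard = (B.cliqueSet n).ncard := by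
  classical
  have hB : B = A.map e.toEquiv.toEmbedding := by
    ext x y
    rw [← SimpleGraph.comap_symm]
    simp only [SimpleGraph.comap_adj, Equiv.toEmbedding_apply]
    constructor
    · intro h
      exact e.symm.map_adj_iff.mpr h
    · intro h
      exact e.symm.map_adj_iff.mp h
  rw [hB]
  erw [SimpleGraph.cliqueSet_map_of_equiv]
  exact (Set.ncard_image_of_injective _ (Finset.map_injective _)).symm

lemma aux_induce_nbhd_iso {α : Type*} (Γ : SimpleGraph α) (φ : Γ ≃g Γ) (u : α) (n : ℕ) :
    ((Γ.induce (Γ.neighborSet u)).cliqueSet n).ncard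
      = ((Γ.induce (Γ.neighborSet (φ u))).cliqueSet n).ncard := by
  refine aux_ncard_cliqueSet_iso _ _ ⟨Equiv.subtypeEquiv φ.toEquiv fun x => ?_, ?_⟩ n
  · simp only [SimpleGraph.mem_neighborSet, Set.mem_setOf_eq]
    exact φ.map_adj_iff.symm
  · intro a b
    simp only [SimpleGraph.comap_adj, Function.Embedding.coe_subtype, Equiv.subtypeEquiv_apply]
    exact φ.map_adj_iff

lemma aux_link {α : Type*} (Γ : SimpleGraph α) (v : α) (n : ℕ) :
    {T | T ∈ Γ.cliqueSet (n + 1) ∧ v ∈ T}.ncard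
      = ((Γ.induce (Γ.neighborSet v)).cliqueSet n).ncard := by
  classical
  set N := Γ.neighborSet v with hN
  set f : Finset α → Finset ↥N := fun T => (T.erase v).subtype (· ∈ N) with hf
  have hmemN : ∀ T : Finset α, T ∈ Γ.cliqueSet (n + 1) → v ∈ T →
      ∀ x ∈ T.erase v, x ∈ N := by
    intro T hT hvT x hx
    have hxv := Finset.ne_of_mem_erase hx
    have hxT := Finset.mem_of_mem_erase hx
    exact (hT.isClique (Finset.mem_coe.mpr hvT) (Finset.mem_coe.mpr hxT) (Ne.symm hxv))
  have hback : ∀ T : Finset α, T ∈ Γ.cliqueSet (n + 1) → v ∈ T →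
      (f T).map (Function.Embedding.subtype _) = T.erase v := by
    intro T hT hvT
    rw [hf]
    simp only [Finset.subtype_map]
    exact Finset.filter_true_of_mem (hmemN T hT hvT)
  have hinj : Set.InjOn f {T | T ∈ Γ.cliqueSet (n + 1) ∧ v ∈ T} := by
    intro T1 h1 T2 h2 h12
    have e1 := hback T1 h1.1 h1.2
    have e2 := hback T2 h2.1 h2.2
    have : T1.erase v = T2.erase v := by rw [← e1, ← e2, h12]
    rw [← Finset.insert_erase h1.2, ← Finset.insert_erase h2.2, this]
  have himg : f '' {T | T ∈ Γ.cliqueSet (n + 1) ∧ v ∈ T}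
      = (Γ.induce N).cliqueSet n := by
    ext T'
    constructor
    · rintro ⟨T, ⟨hT, hvT⟩, rfl⟩
      constructor
      · intro x hx y hy hxy
        have hx' : (x : α) ∈ T.erase v := by
          have := Finset.mem_coe.mp hx; rw [hf] at this
          exact Finset.mem_subtype.mp this
        have hy' : (y : α) ∈ T.erase v := by
          have := Finset.mem_coe.mp hy; rw [hf] at this
          exact Finset.mem_subtype.mp this
        have : Γ.Adj (x : α) (y : α) :=
          hT.isClique (Finset.mem_coe.mpr (Finset.mem_of_mem_erase hx'))
            (Finset.mem_coe.mpr (Finset.mem_of_mem_erase hy'))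
            (fun h => hxy (Subtype.ext h))
        exact this
      · have : (f T).card = (T.erase v).card := by
          rw [← hback T hT hvT, Finset.card_map]
        rw [this, Finset.card_erase_of_mem hvT, hT.card_eq]
        omega
    · intro hT'
      refine ⟨insert v (T'.map (Function.Embedding.subtype _)), ⟨⟨?_, ?_⟩, Finset.mem_insert_self _ _⟩, ?_⟩
      · -- isClique
        intro x hx y hy hxy
        simp only [Finset.coe_insert, Set.mem_insert_iff, Finset.mem_coe,
          Finset.mem_map, Function.Embedding.coe_subtype] at hx hy
        rcases hx with rfl | ⟨w1, hw1, rfl⟩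
        · rcases hy with rfl | ⟨w2, hw2, rfl⟩
          · exact absurd rfl hxy
          · exact w2.2
        · rcases hy with rfl | ⟨w2, hw2, rfl⟩
          · exact w1.2.symm
          · have hne : w1 ≠ w2 := fun h => hxy (by rw [h])
            exact hT'.isClique (Finset.mem_coe.mpr hw1) (Finset.mem_coe.mpr hw2) hne
      · -- card
        have hvnot : v ∉ T'.map (Function.Embedding.subtype _) := by
          simp only [Finset.mem_map, Function.Embedding.coe_subtype]
          rintro ⟨w, _, hw⟩
          have : v ∈ N := hw ▸ w.2
          exact Γ.irrefl (hN ▸ this)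
        rw [Finset.card_insert_of_notMem hvnot, Finset.card_map, hT'.card_eq]
      · -- f of it = T'
        have hvnot : v ∉ T'.map (Function.Embedding.subtype _) := by
          simp only [Finset.mem_map, Function.Embedding.coe_subtype]
          rintro ⟨w, _, hw⟩
          have : v ∈ N := hw ▸ w.2
          exact Γ.irrefl (hN ▸ this)
        rw [hf]
        simp only [Finset.erase_insert hvnot]
        ext w
        simp [Finset.mem_subtype, Finset.mem_map, Function.Embedding.coe_subtype,
          Subtype.coe_injective.eq_iff]
  rw [← himg, Set.ncard_image_of_injOn hinj]

lemma aux_mul_iso {F : Type*} [Field F] (k : ℕ) (G : SimpleGraph F)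
    (hG : ∀ a b : F, G.Adj a b ↔ a ≠ b ∧ ∃ c : F, c ≠ 0 ∧ c ^ k = a - b)
    (v : F) (hv : ∃ c : F, c ≠ 0 ∧ c ^ k = v) :
    ∃ φ : (G.induce {a : F | ∃ c : F, c ≠ 0 ∧ c ^ k = a}) ≃g
        (G.induce {a : F | ∃ c : F, c ≠ 0 ∧ c ^ k = a}),
      ((φ ⟨1, 1, one_ne_zero, one_pow k⟩ : {a : F | ∃ c : F, c ≠ 0 ∧ c ^ k = a}) : F) = v := by
  set S := {a : F | ∃ c : F, c ≠ 0 ∧ c ^ k = a} with hS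
  have hvS : v ∈ S := hv
  have hS0 : ∀ a ∈ S, a ≠ 0 := by rintro a ⟨c, hc, rfl⟩; exact pow_ne_zero k hc
  have hmul : ∀ a ∈ S, ∀ b ∈ S, a * b ∈ S := by
    rintro a ⟨c, hc, rfl⟩ b ⟨d, hd, rfl⟩
    exact ⟨c * d, mul_ne_zero hc hd, by rw [mul_pow]⟩
  have hinv : ∀ a ∈ S, a⁻¹ ∈ S := by
    rintro a ⟨c, hc, rfl⟩
    exact ⟨c⁻¹, inv_ne_zero hc, by rw [inv_pow]⟩
  have hiff : ∀ x : F, x ∈ S ↔ v * x ∈ S := by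
    intro x
    constructor
    · intro hx; exact hmul _ hvS _ hx
    · intro hx
      have : v⁻¹ * (v * x) ∈ S := hmul _ (hinv _ hvS) _ hx
      rwa [inv_mul_cancel_left₀ (hS0 _ hvS)] at this
  have hv0 : v ≠ 0 := hS0 _ hvS
  refine ⟨⟨⟨fun x => ⟨v * x.1, (hiff x.1).mp x.2⟩,
      fun x => ⟨v⁻¹ * x.1, hmul _ (hinv _ hvS) _ x.2⟩,
      fun x => Subtype.ext (inv_mul_cancel_left₀ hv0 x.1),
      fun x => Subtype.ext (mul_inv_cancel_left₀ hv0 x.1)⟩, ?_⟩, mul_one v⟩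
  intro a b
  simp only [SimpleGraph.comap_adj, Function.Embedding.coe_subtype, Equiv.coe_fn_mk]
  rw [hG, hG]
  constructor
  · rintro ⟨hne, c, hc, hck⟩
    refine ⟨fun h => hne (by rw [h]), ?_⟩
    have : v⁻¹ * (v * a.1 - v * b.1) ∈ S :=
      hmul _ (hinv _ hvS) _ ⟨c, hc, hck⟩
    rw [mul_sub, inv_mul_cancel_left₀ hv0, inv_mul_cancel_left₀ hv0] at this
    exact this
  · rintro ⟨hne, c, hc, hck⟩
    refine ⟨fun h => hne (mul_left_cancel₀ hv0 h), ?_⟩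
    have : v * (a.1 - b.1) ∈ S := hmul _ hvS _ ⟨c, hc, hck⟩
    rw [mul_sub] at this
    exact this

lemma aux_card_S {F : Type*} [Field F] [Fintype F] (k : ℕ) (_hk : k ≠ 0)
    (hdvd : k ∣ Fintype.card F - 1) :
    {a : F | ∃ c : F, c ≠ 0 ∧ c ^ k = a}.ncard * k = Fintype.card F - 1 := by
  classical
  obtain ⟨g, hg⟩ := IsCyclic.exists_generator (α := Fˣ)
  have hcomm : ∀ (m : ℤ), (g ^ k) ^ m = (g ^ m) ^ k := by
    intro m
    rw [← zpow_natCast g k, ← zpow_mul, ← zpow_natCast (g ^ m) k, ← zpow_mul, mul_comm]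
  have hS : {a : F | ∃ c : F, c ≠ 0 ∧ c ^ k = a}
      = Units.val '' (↑(Subgroup.zpowers (g ^ k)) : Set Fˣ) := by
    ext a
    constructor
    · rintro ⟨c, hc, rfl⟩
      obtain ⟨m, hm⟩ := Subgroup.mem_zpowers_iff.mp (hg (Units.mk0 c hc))
      refine ⟨(g ^ k) ^ m, Subgroup.zpow_mem _ (Subgroup.mem_zpowers _) m, ?_⟩
      rw [hcomm, hm]
      simp
    · rintro ⟨u, hu, rfl⟩
      obtain ⟨m, hm⟩ := Subgroup.mem_zpowers_iff.mp hu
      refine ⟨((g ^ m : Fˣ) : F), Units.ne_zero _, ?_⟩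
      rw [← Units.val_pow_eq_pow_val, ← hcomm, hm]
  rw [hS, Set.ncard_image_of_injective _ Units.val_injective]
  have h1 : (↑(Subgroup.zpowers (g ^ k)) : Set Fˣ).ncard = orderOf (g ^ k) := by
    rw [← Nat.card_coe_set_eq]
    exact Nat.card_zpowers _
  rw [h1, orderOf_pow, orderOf_eq_card_of_forall_mem_zpowers hg, Nat.card_eq_fintype_card,
    Fintype.card_units]
  rw [Nat.gcd_eq_right hdvd]
  exact Nat.div_mul_cancel hdvd

theorem genPaley_H_H1_clique_count_relation {F : Type*} [Field F] [Fintype F]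
    (k : ℕ) (hk : 2 ≤ k)
    (heven : Even (Fintype.card F) → Fintype.card F % k = 1)
    (hodd : Odd (Fintype.card F) → Fintype.card F % (2 * k) = 1)
    (G : SimpleGraph F)
    (hG : ∀ a b : F, G.Adj a b ↔ a ≠ b ∧ ∃ c : F, c ≠ 0 ∧ c ^ k = a - b)
    (n : ℕ) (hn : 0 < n) :
    ∀ H : SimpleGraph {a : F | ∃ c : F, c ≠ 0 ∧ c ^ k = a},
      H = G.induce {a : F | ∃ c : F, c ≠ 0 ∧ c ^ k = a} →
      ((H.cliqueSet (n + 1)).ncard : ℚ)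
        = ((Fintype.card F : ℚ) - 1) / (k * (n + 1)) *
            ((H.induce (H.neighborSet ⟨1, 1, one_ne_zero, one_pow k⟩)).cliqueSet n).ncard := by
  classical
  intro H hH
  subst hH
  have hq1 : 1 ≤ Fintype.card F := Fintype.card_pos
  have hk0 : k ≠ 0 := by omega
  -- divisibility
  have hdvd : k ∣ Fintype.card F - 1 := by
    rcases Nat.even_or_odd (Fintype.card F) with he | ho
    · have h1 := heven he
      have h2 := Nat.div_add_mod (Fintype.card F) k
      exact ⟨Fintype.card F / k, by omega⟩
    · have h1 := hodd ho
      have h2 := Nat.div_add_mod (Fintype.card F) (2 * k)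
      have h3 : 2 * k ∣ Fintype.card F - 1 := ⟨Fintype.card F / (2 * k), by omega⟩
      exact dvd_trans (dvd_mul_left k 2) h3
  have hcardS := aux_card_S k hk0 hdvd
  set S := {a : F | ∃ c : F, c ≠ 0 ∧ c ^ k = a} with hS
  set Γ := G.induce S with hΓ
  set v₁ : ↥S := ⟨1, 1, one_ne_zero, one_pow k⟩ with hv₁
  haveI : Fintype ↥S := Fintype.ofFinite _
  set A := (Γ.cliqueSet (n + 1)).ncard with hA
  set B := ((Γ.induce (Γ.neighborSet v₁)).cliqueSet n).ncard with hB
  -- per-vertex link count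
  have hlinks : ∀ v : ↥S, {T | T ∈ Γ.cliqueSet (n + 1) ∧ v ∈ T}.ncard = B := by
    intro v
    rw [aux_link Γ v n]
    obtain ⟨φ, hφ⟩ := aux_mul_iso k G hG v.1 v.2
    have h2 : φ v₁ = v := Subtype.ext hφ
    have := aux_induce_nbhd_iso Γ φ v₁ n
    rw [h2] at this
    exact this.symm
  -- double counting
  have hdouble : (n + 1) * A = Fintype.card ↥S * B := by
    have hAfin : A = (Γ.cliqueFinset (n + 1)).card := by
      rw [hA, ← SimpleGraph.coe_cliqueFinset, Set.ncard_coe_finset]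
    have hlink' : ∀ v : ↥S,
        ((Γ.cliqueFinset (n + 1)).filter (fun T => v ∈ T)).card = B := by
      intro v
      rw [← hlinks v]
      have : {T | T ∈ Γ.cliqueSet (n + 1) ∧ v ∈ T}
          = ↑((Γ.cliqueFinset (n + 1)).filter (fun T => v ∈ T)) := by
        ext T
        simp [SimpleGraph.mem_cliqueFinset_iff, SimpleGraph.mem_cliqueSet_iff]
      rw [this, Set.ncard_coe_finset]
    calc (n + 1) * A = ∑ _T ∈ Γ.cliqueFinset (n + 1), (n + 1) := by
          rw [Finset.sum_const, smul_eq_mul, hAfin, mul_comm]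
      _ = ∑ T ∈ Γ.cliqueFinset (n + 1), T.card :=
          Finset.sum_congr rfl fun T hT =>
            ((SimpleGraph.mem_cliqueFinset_iff.mp hT).card_eq).symm
      _ = ∑ T ∈ Γ.cliqueFinset (n + 1), ∑ v : ↥S, if v ∈ T then 1 else 0 := by
          refine Finset.sum_congr rfl fun T _ => ?_
          rw [← Finset.card_filter]
          congr 1
          ext x
          simp
      _ = ∑ v : ↥S, ∑ T ∈ Γ.cliqueFinset (n + 1), if v ∈ T then 1 else 0 :=
          Finset.sum_comm
      _ = ∑ v : ↥S, ((Γ.cliqueFinset (n + 1)).filter (fun T => v ∈ T)).card :=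
          Finset.sum_congr rfl fun v _ => (Finset.card_filter _ _).symm
      _ = ∑ _v : ↥S, B := Finset.sum_congr rfl fun v _ => hlink' v
      _ = Fintype.card ↥S * B := by
          rw [Finset.sum_const, smul_eq_mul, Finset.card_univ]
  have hcardV : Fintype.card ↥S = S.ncard := by
    rw [Set.ncard_eq_toFinset_card', Set.toFinset_card]
  rw [hcardV] at hdouble
  -- final arithmetic
  have hq : ((Fintype.card F : ℚ)) - 1 = ((Fintype.card F - 1 : ℕ) : ℚ) := by
    rw [Nat.cast_sub hq1, Nat.cast_one]
  rw [hq, ← hcardS]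
  have hkQ : (k : ℚ) ≠ 0 := Nat.cast_ne_zero.mpr hk0
  have hnQ : ((n : ℚ) + 1) ≠ 0 := by positivity
  have hd : ((n + 1) * A : ℕ) = (S.ncard * B : ℕ) := hdouble
  have hdQ : ((n : ℚ) + 1) * A = (S.ncard : ℚ) * B := by exact_mod_cast hd
  push_cast
  field_simp
  linear_combination hdQ
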